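/- arXiv:2207.02136 — 2 statements merged into one kernel-verified Lean document; each statement's English description precedes it below -/
import Mathlib

section
/- Let G = (V, E, c) be a finite directed graph with nonnegative edge costs admitting a covering circulation, and let X : E → ℤ be a circulation with k = ⌈log₂ ‖X‖⌉ (and X nonzero). Then there exist nonnegative integer circulations A_0, B_0, ..., A_k, B_k such that X = Σ_{i=0}^{k} 2^i (A_i − B_i) and cost(A_0 + ... + A_k + B_0 + ... + B_k) ≤ (k+1) · mccc(G). -/
open Finset

def IsCircZ {V E : Type} [Fintype E] [DecidableEq V] (src tgt : E → V) (X : E → ℤ) : Prop :=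
  ∀ v : V, (∑ e, if tgt e = v then X e else 0) = ∑ e, if src e = v then X e else 0

def circCost {E : Type} [Fintype E] (c : E → ℝ) (Z : E → ℤ) : ℝ :=
  ∑ e, c e * (Z e : ℝ)

def circNorm {E : Type} [Fintype E] (X : E → ℤ) : ℕ :=
  Finset.univ.sup fun e => (X e).natAbs

noncomputable def mccc {V E : Type} [Fintype E] [DecidableEq V]
    (src tgt : E → V) (c : E → ℝ) : ℝ :=
  sInf {r : ℝ | ∃ C : E → ℤ, IsCircZ src tgt C ∧ (∀ e, 1 ≤ C e) ∧ r = circCost c C}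

section aux
variable {V E : Type} [Fintype E] [DecidableEq V] {src tgt : E → V}

lemma ite_sub' (p : Prop) [Decidable p] (a b : ℤ) :
    (if p then a - b else 0) = (if p then a else 0) - (if p then b else 0) := by
  split <;> simp

lemma isCirc_sub {Z W : E → ℤ} (hZ : IsCircZ src tgt Z) (hW : IsCircZ src tgt W) :
    IsCircZ src tgt (fun e => Z e - W e) := by
  intro v
  simp only [ite_sub', Finset.sum_sub_distrib, hZ v, hW v]

lemma isCirc_neg {Z : E → ℤ} (hZ : IsCircZ src tgt Z) :
    IsCircZ src tgt (fun e => - Z e) := by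
  have h := isCirc_sub (src := src) (tgt := tgt) (Z := fun _ => (0:ℤ)) (W := Z) (fun v => by simp) hZ
  simpa using h

lemma isCirc_add {Z W : E → ℤ} (hZ : IsCircZ src tgt Z) (hW : IsCircZ src tgt W) :
    IsCircZ src tgt (fun e => Z e + W e) := by
  have h := isCirc_sub hZ (isCirc_neg hW)
  simpa [sub_neg_eq_add] using h

lemma isCirc_two_cancel {t : E → ℤ} (h : IsCircZ src tgt (fun e => 2 * t e)) :
    IsCircZ src tgt t := by
  intro v
  have h2 := h v
  have e1 : ∀ (p : E → Prop) (_ : DecidablePred p),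
      (∑ e, if p e then 2 * t e else 0) = 2 * ∑ e, if p e then t e else 0 := by
    intro p _
    rw [Finset.mul_sum]
    exact Finset.sum_congr rfl fun e _ => by split <;> simp
  rw [e1 _ _, e1 _ _] at h2
  omega

/-- tail of an edge in the residual orientation -/
def tailR (src tgt : E → V) (R : E → ℤ) (e : E) : V := if 0 < R e then src e else tgt e
def headR (src tgt : E → V) (R : E → ℤ) (e : E) : V := if 0 < R e then tgt e else src e

lemma exists_next (R : E → ℤ) (hR : IsCircZ src tgt R) (e : E) (he : R e ≠ 0) :
    ∃ e', R e' ≠ 0 ∧ tailR src tgt R e' = headR src tgt R e := by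
  by_contra hcon
  push_neg at hcon
  set v := headR src tgt R e with hv
  have h1 : ∀ e', src e' = v → R e' ≤ 0 := by
    intro e' hs
    by_contra hpos
    push_neg at hpos
    exact hcon e' (by omega) (by simp [tailR, hpos, hs])
  have h2 : ∀ e', tgt e' = v → 0 ≤ R e' := by
    intro e' ht
    by_contra hneg
    push_neg at hneg
    exact hcon e' (by omega) (by simp [tailR, not_lt.mpr (le_of_lt hneg), ht])
  have hsrc : (∑ e', if src e' = v then R e' else 0) ≤ 0 := by
    apply Finset.sum_nonpos
    intro e' _
    split
    · exact h1 e' (by assumption)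
    · exact le_refl 0
  have htgt : (0:ℤ) ≤ ∑ e', if tgt e' = v then R e' else 0 := by
    apply Finset.sum_nonneg
    intro e' _
    split
    · exact h2 e' (by assumption)
    · exact le_refl 0
  have heq := hR v
  rcases lt_or_gt_of_ne he with hneg | hpos
  · -- R e < 0, v = src e, sum over src ≤ R e < 0
    have hv' : src e = v := by simp [hv, headR, not_lt.mpr (le_of_lt hneg)]
    have hle : -R e ≤ (∑ e', if src e' = v then -R e' else 0) := by
      have hnn : ∀ e' ∈ Finset.univ, (0:ℤ) ≤ (if src e' = v then -R e' else 0) := by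
        intro e' _
        split
        · simpa using h1 e' (by assumption)
        · exact le_refl 0
      have := Finset.single_le_sum hnn (Finset.mem_univ e)
      simpa [hv'] using this
    have hneg' : (∑ e', if src e' = v then -R e' else 0)
        = - ∑ e', if src e' = v then R e' else 0 := by
      rw [← Finset.sum_neg_distrib]
      apply Finset.sum_congr rfl
      intro e' _
      split <;> simp
    have hlt : (∑ e', if src e' = v then R e' else 0) ≤ R e := by omega
    omega
  · -- 0 < R e, v = tgt e, sum over tgt ≥ R e > 0
    have hv' : tgt e = v := by simp [hv, headR, hpos]
    have hle : R e ≤ (∑ e', if tgt e' = v then R e' else 0) := by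
      have hnn : ∀ e' ∈ Finset.univ, (0:ℤ) ≤ (if tgt e' = v then R e' else 0) := by
        intro e' _
        split
        · exact h2 e' (by assumption)
        · exact le_refl 0
      have := Finset.single_le_sum hnn (Finset.mem_univ e)
      simpa [hv'] using this
    omega

/-- conforming sub-circulation predicate -/
def Conf (R δ : E → ℤ) : Prop :=
  ∀ e, δ e = 0 ∨ (0 < R e ∧ δ e = 1) ∨ (R e < 0 ∧ δ e = -1)

noncomputable def nxt (src tgt : E → V) (R : E → ℤ) (hR : IsCircZ src tgt R)
    (p : {e : E // R e ≠ 0}) : {e : E // R e ≠ 0} :=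
  ⟨(exists_next R hR p.1 p.2).choose, (exists_next R hR p.1 p.2).choose_spec.1⟩

lemma nxt_spec (R : E → ℤ) (hR : IsCircZ src tgt R) (p : {e : E // R e ≠ 0}) :
    tailR src tgt R ((nxt src tgt R hR p).1) = headR src tgt R p.1 :=
  (exists_next R hR p.1 p.2).choose_spec.2

lemma exists_conf_cycle (R : E → ℤ) (hR : IsCircZ src tgt R) (e₀ : E) (h0 : R e₀ ≠ 0) :
    ∃ δ : E → ℤ, IsCircZ src tgt δ ∧ Conf R δ ∧ ∃ e, δ e ≠ 0 := by
  classical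
  set f : ℕ → {e : E // R e ≠ 0} := fun n => (nxt src tgt R hR)^[n] ⟨e₀, h0⟩ with hf
  have hchain : ∀ n, tailR src tgt R ((f (n+1)).1) = headR src tgt R ((f n).1) := by
    intro n
    have : f (n+1) = nxt src tgt R hR (f n) := Function.iterate_succ_apply' _ _ _
    rw [this]
    exact nxt_spec R hR (f n)
  -- pigeonhole: some edge repeats
  obtain ⟨i, j, hij, hfe⟩ :
      ∃ i j : Fin (Fintype.card E + 1), i ≠ j ∧ (f i).1 = (f j).1 := by
    apply Fintype.exists_ne_map_eq_of_card_lt (fun i : Fin (Fintype.card E + 1) => (f i).1)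
    simp
  have hP : ∃ n, ∃ m, m < n ∧ (f m).1 = (f n).1 := by
    rcases Nat.lt_or_ge i.1 j.1 with hlt | hge
    · exact ⟨j, i, hlt, hfe⟩
    · have : j.1 < i.1 := lt_of_le_of_ne hge (fun hh => hij (Fin.ext hh.symm))
      exact ⟨i, j, this, hfe.symm⟩
  set n0 := Nat.find hP with hn0
  obtain ⟨m0, hm0lt, hm0eq⟩ := Nat.find_spec hP
  have hinj : Set.InjOn (fun i => (f i).1) (Finset.Ico m0 n0 : Finset ℕ) := by
    intro a ha b hb hab
    simp only [Finset.coe_Ico, Set.mem_Ico] at ha hb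
    by_contra hne
    rcases Nat.lt_or_ge a b with hlt | hge
    · exact Nat.find_min hP (show b < n0 from hb.2) ⟨a, hlt, hab⟩
    · have : b < a := lt_of_le_of_ne hge (fun hh => hne hh.symm)
      exact Nat.find_min hP (show a < n0 from ha.2) ⟨b, this, hab.symm⟩
  set S : Finset E := (Finset.Ico m0 n0).image (fun i => (f i).1) with hS
  have hmemS : ∀ e ∈ S, R e ≠ 0 := by
    intro e he
    simp only [hS, Finset.mem_image] at he
    obtain ⟨i, _, hi⟩ := he
    exact hi ▸ (f i).2
  refine ⟨fun e => if e ∈ S then (if 0 < R e then 1 else -1) else 0, ?_, ?_, ?_⟩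
  · -- circulation
    intro v
    rw [← sub_eq_zero, ← Finset.sum_sub_distrib]
    have hterm : ∀ e : E,
        ((if tgt e = v then (if e ∈ S then (if 0 < R e then (1:ℤ) else -1) else 0) else 0)
          - (if src e = v then (if e ∈ S then (if 0 < R e then (1:ℤ) else -1) else 0) else 0))
        = if e ∈ S then ((if headR src tgt R e = v then (1:ℤ) else 0)
            - (if tailR src tgt R e = v then 1 else 0)) else 0 := by
      intro e
      by_cases heS : e ∈ S
      · have hRe := hmemS e heS
        rcases lt_or_gt_of_ne hRe with hneg | hpos
        · simp only [heS, if_true, if_neg (not_lt.mpr (le_of_lt hneg)), headR, tailR]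
          all_goals try (split_ifs <;> ring)
        · simp only [heS, if_true, if_pos hpos, headR, tailR]
          all_goals try (split_ifs <;> ring)
      · simp only [heS, if_false, ite_self, sub_zero]
    rw [Finset.sum_congr rfl (fun e _ => hterm e)]
    rw [Finset.sum_ite_mem, Finset.univ_inter]
    rw [hS, Finset.sum_image
      (fun a ha b hb hab => hinj (by simpa using ha) (by simpa using hb) hab)]
    have hstep : ∀ i ∈ Finset.Ico m0 n0,
        ((if headR src tgt R ((f i).1) = v then (1:ℤ) else 0)
          - (if tailR src tgt R ((f i).1) = v then 1 else 0))
        = (fun n => if tailR src tgt R ((f n).1) = v then (1:ℤ) else 0) (i+1)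
          - (fun n => if tailR src tgt R ((f n).1) = v then (1:ℤ) else 0) i := by
      intro i _
      simp only
      rw [hchain i]
    rw [Finset.sum_congr rfl hstep]
    have htel := Finset.sum_Ico_eq_sum_range
      (f := fun i => (fun n => if tailR src tgt R ((f n).1) = v then (1:ℤ) else 0) (i+1)
          - (fun n => if tailR src tgt R ((f n).1) = v then (1:ℤ) else 0) i) (m := m0) (n := n0)
    rw [htel]
    have htel2 := Finset.sum_range_sub
      (f := fun j => if tailR src tgt R ((f (m0 + j)).1) = v then (1:ℤ) else 0) (n := n0 - m0)
    have hgoal : ∀ j, m0 + j + 1 = m0 + (j + 1) := fun j => by omega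
    calc (∑ j ∈ Finset.range (n0 - m0),
            ((fun n => if tailR src tgt R ((f n).1) = v then (1:ℤ) else 0) (m0 + j + 1)
            - (fun n => if tailR src tgt R ((f n).1) = v then (1:ℤ) else 0) (m0 + j)))
        = ∑ j ∈ Finset.range (n0 - m0),
            ((if tailR src tgt R ((f (m0 + (j+1))).1) = v then (1:ℤ) else 0)
            - (if tailR src tgt R ((f (m0 + j)).1) = v then (1:ℤ) else 0)) := by
          refine Finset.sum_congr rfl fun j _ => ?_
          simp only
          rw [hgoal j]
      _ = (if tailR src tgt R ((f (m0 + (n0 - m0))).1) = v then (1:ℤ) else 0)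
            - (if tailR src tgt R ((f (m0 + 0)).1) = v then (1:ℤ) else 0) := htel2
      _ = 0 := by
          have h1 : m0 + (n0 - m0) = n0 := by omega
          rw [h1, Nat.add_zero, hm0eq]
          exact sub_self _
  · -- conforming
    intro e
    by_cases heS : e ∈ S
    · have hRe := hmemS e heS
      rcases lt_or_gt_of_ne hRe with hneg | hpos
      · right; right
        exact ⟨hneg, by simp [heS, not_lt.mpr (le_of_lt hneg)]⟩
      · right; left
        exact ⟨hpos, by simp [heS, hpos]⟩
    · left; simp [heS]
  · -- nonzero
    refine ⟨(f m0).1, ?_⟩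
    have hm : (f m0).1 ∈ S := by
      rw [hS]
      exact Finset.mem_image_of_mem _ (Finset.mem_Ico.mpr ⟨le_refl _, hm0lt⟩)
    have := hmemS _ hm
    rcases lt_or_gt_of_ne this with hneg | hpos
    · simp [hm, not_lt.mpr (le_of_lt hneg)]
    · simp [hm, hpos]


lemma natAbs_sum_lt {R R' : E → ℤ} (hle : ∀ e, (R' e).natAbs ≤ (R e).natAbs)
    (e₁ : E) (hlt : (R' e₁).natAbs < (R e₁).natAbs) :
    (∑ e, (R' e).natAbs) < ∑ e, (R e).natAbs :=
  Finset.sum_lt_sum (fun e _ => hle e) ⟨e₁, Finset.mem_univ e₁, hlt⟩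

/-- conforming cycle through a prescribed edge -/
lemma exists_conf_cycle_through (N : ℕ) : ∀ (R : E → ℤ), (∑ e, (R e).natAbs) ≤ N →
    IsCircZ src tgt R → ∀ e₀ : E, R e₀ ≠ 0 →
    ∃ δ : E → ℤ, IsCircZ src tgt δ ∧ Conf R δ ∧ δ e₀ ≠ 0 := by
  induction N using Nat.strong_induction_on with
  | _ N ih =>
    intro R hN hR e₀ h0
    obtain ⟨δ, hδc, hδconf, e₁, hδne⟩ := exists_conf_cycle R hR e₀ h0
    by_cases hδ0 : δ e₀ ≠ 0
    · exact ⟨δ, hδc, hδconf, hδ0⟩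
    · push_neg at hδ0
      set R' : E → ℤ := fun e => R e - δ e with hR'
      have hconf' : ∀ e, (R' e).natAbs ≤ (R e).natAbs ∧ (0 < R' e → 0 < R e)
          ∧ (R' e < 0 → R e < 0) := by
        intro e
        have hd := hδconf e
        simp only [hR']
        omega
      have hc' : IsCircZ src tgt R' := isCirc_sub hR hδc
      have hlt : (∑ e, (R' e).natAbs) < ∑ e, (R e).natAbs := by
        apply natAbs_sum_lt (fun e => (hconf' e).1) e₁
        have hd := hδconf e₁
        simp only [hR']
        omega
      have hR'e₀ : R' e₀ ≠ 0 := by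
        simp only [hR', hδ0]
        omega
      obtain ⟨δ', hc2, hconf2, hne2⟩ :=
        ih (∑ e, (R' e).natAbs) (lt_of_lt_of_le hlt hN) R' (le_refl _) hc' e₀ hR'e₀
      refine ⟨δ', hc2, ?_, hne2⟩
      intro e
      rcases hconf2 e with h | h | h
      · exact Or.inl h
      · exact Or.inr (Or.inl ⟨(hconf' e).2.1 h.1, h.2⟩)
      · exact Or.inr (Or.inr ⟨(hconf' e).2.2 h.1, h.2⟩)

/-- parity circulation: |σ| ≤ 1, σ ≡ Z (mod 2), σ a circulation -/
lemma exists_parity_circ (N : ℕ) : ∀ (Z : E → ℤ), (∑ e, (Z e).natAbs) ≤ N →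
    IsCircZ src tgt Z →
    ∃ σ : E → ℤ, IsCircZ src tgt σ ∧ (∀ e, (σ e).natAbs ≤ 1) ∧ (∀ e, 2 ∣ (Z e - σ e)) := by
  induction N using Nat.strong_induction_on with
  | _ N ih =>
    intro Z hN hZ
    by_cases hsmall : ∀ e, (Z e).natAbs ≤ 1
    · exact ⟨Z, hZ, hsmall, fun e => ⟨0, by ring⟩⟩
    · push_neg at hsmall
      obtain ⟨e₀, he₀⟩ := hsmall
      have h0 : Z e₀ ≠ 0 := by omega
      obtain ⟨δ, hδc, hδconf, hδne⟩ :=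
        exists_conf_cycle_through (∑ e, (Z e).natAbs) Z (le_refl _) hZ e₀ h0
      set Z' : E → ℤ := fun e => Z e - 2 * δ e with hZ'
      have hZ'c : IsCircZ src tgt Z' := by
        have h2δ : IsCircZ src tgt (fun e => 2 * δ e) := by
          have := isCirc_add hδc hδc
          simpa [two_mul] using this
        exact isCirc_sub hZ h2δ
      have hle : ∀ e, (Z' e).natAbs ≤ (Z e).natAbs := by
        intro e
        have hd := hδconf e
        simp only [hZ']
        omega
      have hlt : (∑ e, (Z' e).natAbs) < ∑ e, (Z e).natAbs := by
        apply natAbs_sum_lt hle e₀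
        have hd := hδconf e₀
        simp only [hZ']
        omega
      obtain ⟨σ, hσc, hσ1, hσp⟩ :=
        ih (∑ e, (Z' e).natAbs) (lt_of_lt_of_le hlt hN) Z' (le_refl _) hZ'c
      refine ⟨σ, hσc, hσ1, fun e => ?_⟩
      have := hσp e
      have : (2:ℤ) ∣ (Z' e - σ e) := this
      simp only [hZ'] at this
      omega

variable (c : E → ℝ)

lemma circCost_neg (ρ : E → ℤ) : circCost c (fun e => -ρ e) = - circCost c ρ := by
  unfold circCost
  rw [← Finset.sum_neg_distrib]
  refine Finset.sum_congr rfl fun e _ => ?_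
  push_cast
  ring

lemma level (hc : ∀ e, 0 ≤ c e) {C : E → ℤ} (hCc : IsCircZ src tgt C)
    (hC1 : ∀ e, 1 ≤ C e) (Z : E → ℤ) (hZ : IsCircZ src tgt Z) :
    ∃ t : E → ℤ, IsCircZ src tgt t ∧
      ∃ A B : E → ℤ, IsCircZ src tgt A ∧ IsCircZ src tgt B ∧
        (∀ e, 0 ≤ A e) ∧ (∀ e, 0 ≤ B e) ∧
        (∀ e, Z e = 2 * t e + (A e - B e)) ∧
        (∀ e, 2 * (t e).natAbs ≤ (Z e).natAbs + 1) ∧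
        ((∀ e, (Z e).natAbs ≤ 1) → t = fun _ => 0) ∧
        circCost c (fun e => A e + B e) ≤ circCost c C := by
  classical
  obtain ⟨σ, hσc, hσ1, hσp, hσsmall⟩ :
      ∃ σ : E → ℤ, IsCircZ src tgt σ ∧ (∀ e, (σ e).natAbs ≤ 1) ∧ (∀ e, 2 ∣ (Z e - σ e)) ∧
        ((∀ e, (Z e).natAbs ≤ 1) → σ = Z) := by
    by_cases hsmall : ∀ e, (Z e).natAbs ≤ 1
    · exact ⟨Z, hZ, hsmall, fun e => ⟨0, by ring⟩, fun _ => rfl⟩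
    · obtain ⟨σ, h1, h2, h3⟩ := exists_parity_circ (∑ e, (Z e).natAbs) Z (le_refl _) hZ
      exact ⟨σ, h1, h2, h3, fun h => absurd h hsmall⟩
  set t : E → ℤ := fun e => (Z e - σ e) / 2 with ht
  have ht2 : ∀ e, 2 * t e = Z e - σ e := fun e => Int.mul_ediv_cancel' (hσp e)
  have htc : IsCircZ src tgt t := by
    apply isCirc_two_cancel
    have h' : (fun e => 2 * t e) = fun e => Z e - σ e := funext fun e => ht2 e
    rw [h']
    exact isCirc_sub hZ hσc
  set F : E → ℤ := fun e => C e - σ e with hF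
  have hFc : IsCircZ src tgt F := isCirc_sub hCc hσc
  obtain ⟨ρ₀, hρ₀c, hρ₀1, hρ₀p⟩ := exists_parity_circ (∑ e, (F e).natAbs) F (le_refl _) hFc
  set ρ : E → ℤ := if 0 ≤ circCost c ρ₀ then ρ₀ else fun e => -ρ₀ e with hρ
  have hρc : IsCircZ src tgt ρ := by
    rw [hρ]; split
    · exact hρ₀c
    · exact isCirc_neg hρ₀c
  have hρ1 : ∀ e, (ρ e).natAbs ≤ 1 := by
    intro e; rw [hρ]; split
    · exact hρ₀1 e
    · simpa using hρ₀1 e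
  have hρp : ∀ e, 2 ∣ (C e - σ e - ρ e) := by
    intro e
    have h1 := hρ₀p e
    simp only [hF] at h1
    rw [hρ]; split
    · exact h1
    · simp only
      omega
  have hρcost : 0 ≤ circCost c ρ := by
    rw [hρ]; split
    · assumption
    · rw [circCost_neg]
      linarith [lt_of_not_ge (by assumption : ¬ 0 ≤ circCost c ρ₀)]
  set B : E → ℤ := fun e => (C e - σ e - ρ e) / 2 with hB
  have hB2 : ∀ e, 2 * B e = C e - σ e - ρ e := fun e => Int.mul_ediv_cancel' (hρp e)
  have hBc : IsCircZ src tgt B := by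
    apply isCirc_two_cancel
    have h' : (fun e => 2 * B e) = fun e => C e - σ e - ρ e := funext fun e => hB2 e
    rw [h']
    exact isCirc_sub (isCirc_sub hCc hσc) hρc
  set A : E → ℤ := fun e => B e + σ e with hA
  have hAc : IsCircZ src tgt A := isCirc_add hBc hσc
  refine ⟨t, htc, A, B, hAc, hBc, ?_, ?_, ?_, ?_, ?_, ?_⟩
  · intro e
    have := hB2 e; have := hσ1 e; have := hρ1 e; have := hC1 e
    simp only [hA]
    omega
  · intro e
    have := hB2 e; have := hσ1 e; have := hρ1 e; have := hC1 e
    omega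
  · intro e
    have := ht2 e
    simp only [hA]
    omega
  · intro e
    have := ht2 e; have := hσ1 e
    omega
  · intro hsmall
    funext e
    have hσZ := hσsmall hsmall
    simp only [ht, hσZ, sub_self]
    rfl
  · have hAB : ∀ e, A e + B e = C e - ρ e := by
      intro e
      have := hB2 e
      simp only [hA]
      omega
    have hcc : circCost c (fun e => A e + B e) = circCost c C - circCost c ρ := by
      unfold circCost
      rw [← Finset.sum_sub_distrib]
      refine Finset.sum_congr rfl fun e _ => ?_
      show c e * ((A e + B e : ℤ) : ℝ) = _
      rw [hAB e]
      push_cast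
      ring
    linarith


lemma mccc_attained (hc : ∀ e, 0 ≤ c e)
    (hcov : ∃ C : E → ℤ, IsCircZ src tgt C ∧ ∀ e, 1 ≤ C e) :
    ∃ Cs : E → ℤ, IsCircZ src tgt Cs ∧ (∀ e, 1 ≤ Cs e) ∧
      circCost c Cs =
        sInf {r : ℝ | ∃ C : E → ℤ, IsCircZ src tgt C ∧ (∀ e, 1 ≤ C e) ∧ r = circCost c C} := by
  classical
  set S := {r : ℝ | ∃ C : E → ℤ, IsCircZ src tgt C ∧ (∀ e, 1 ≤ C e) ∧ r = circCost c C} with hSdef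
  obtain ⟨C₀, hC₀c, hC₀1⟩ := hcov
  set K := circCost c C₀ with hKdef
  have hK : K ∈ S := ⟨C₀, hC₀c, hC₀1, rfl⟩
  set M : E → ℤ := fun e => max 1 ⌈K / c e⌉ with hM
  have hfin : (((fun g : E → ℤ => circCost c g) ''
      (Set.pi Set.univ (fun e => Set.Icc (1:ℤ) (M e))))).Finite :=
    Set.Finite.image _ (Set.Finite.pi (fun e => Set.finite_Icc _ _))
  have hsub : S ∩ Set.Iic K ⊆
      (fun g : E → ℤ => circCost c g) '' (Set.pi Set.univ (fun e => Set.Icc (1:ℤ) (M e))) := by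
    rintro r ⟨⟨C, hCc, hC1, hr⟩, hrK⟩
    have hnn : ∀ e' ∈ Finset.univ, (0:ℝ) ≤ c e' * (C e' : ℝ) := by
      intro e' _
      have h1 : (0:ℝ) ≤ (C e' : ℝ) := by
        have := hC1 e'
        exact_mod_cast le_trans zero_le_one (by exact_mod_cast this)
      exact mul_nonneg (hc e') h1
    refine ⟨fun e => if c e = 0 then 1 else C e, ?_, ?_⟩
    · rw [Set.mem_univ_pi]
      intro e
      rw [Set.mem_Icc]
      constructor
      · split
        · exact le_refl 1
        · exact hC1 e
      · split
        · exact le_max_left _ _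
        · rename_i hce0
          have hcpos : 0 < c e := lt_of_le_of_ne (hc e) (Ne.symm hce0)
          have hterm : c e * (C e : ℝ) ≤ K := by
            have := Finset.single_le_sum hnn (Finset.mem_univ e)
            have hrc : circCost c C ≤ K := by rw [← hr]; exact hrK
            exact le_trans this hrc
          have hdiv : (C e : ℝ) ≤ K / c e := by
            rw [le_div_iff₀ hcpos]
            linarith [hterm]
          have hceil : (C e : ℝ) ≤ (⌈K / c e⌉ : ℝ) := le_trans hdiv (Int.le_ceil _)
          have : C e ≤ ⌈K / c e⌉ := by exact_mod_cast hceil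
          exact le_trans this (le_max_right _ _)
    · rw [hr]
      unfold circCost
      refine Finset.sum_congr rfl fun e _ => ?_
      by_cases h : c e = 0 <;> simp [h]
  have hfinT : (S ∩ Set.Iic K).Finite := hfin.subset hsub
  have hneT : (S ∩ Set.Iic K).Nonempty := ⟨K, hK, le_refl K⟩
  obtain ⟨m, hmT, hmle⟩ := Set.exists_min_image (S ∩ Set.Iic K) id hfinT hneT
  have hleast : IsLeast S m := by
    constructor
    · exact hmT.1
    · intro r hr
      by_cases h : r ≤ K
      · exact hmle r ⟨hr, h⟩
      · have h1 : m ≤ K := hmT.2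
        push_neg at h
        linarith
  obtain ⟨Cs, h1, h2, h3⟩ := hmT.1
  exact ⟨Cs, h1, h2, by rw [hleast.csInf_eq, ← h3]⟩

end aux

/-- Any nonzero circulation `X` decomposes as `∑ 2^i (A_i - B_i)` with `A_i, B_i`
nonnegative circulations of total cost at most `(k+1)·mccc(G)`, `k = ⌈log₂ ‖X‖⌉`. -/
theorem stmt_3 {V E : Type} [Fintype E] [DecidableEq V] (src tgt : E → V)
    (c : E → ℝ) (hc : ∀ e, 0 ≤ c e)
    (hcov : ∃ C : E → ℤ, IsCircZ src tgt C ∧ ∀ e, 1 ≤ C e)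
    (X : E → ℤ) (hX : IsCircZ src tgt X) (hX0 : X ≠ 0) :
    ∃ A B : Fin (Nat.clog 2 (circNorm X) + 1) → E → ℤ,
      (∀ i, IsCircZ src tgt (A i) ∧ IsCircZ src tgt (B i) ∧
        (∀ e, 0 ≤ A i e) ∧ (∀ e, 0 ≤ B i e)) ∧
      (∀ e, X e = ∑ i : Fin (Nat.clog 2 (circNorm X) + 1),
        2 ^ (i : ℕ) * (A i e - B i e)) ∧
      circCost c (fun e => (∑ i : Fin (Nat.clog 2 (circNorm X) + 1), (A i e + B i e)))
        ≤ (Nat.clog 2 (circNorm X) + 1) * mccc src tgt c := by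
  classical
  set k := Nat.clog 2 (circNorm X) with hk
  obtain ⟨Cs, hCsc, hCs1, hCscost⟩ := mccc_attained (src := src) (tgt := tgt) c hc hcov
  have L := fun (Z : E → ℤ) (hZ : IsCircZ src tgt Z) =>
    level (src := src) (tgt := tgt) c hc hCsc hCs1 Z hZ
  let st : ℕ → {Z : E → ℤ // IsCircZ src tgt Z} :=
    fun n => Nat.rec ⟨X, hX⟩ (fun _ p => ⟨(L p.1 p.2).choose, (L p.1 p.2).choose_spec.1⟩) n
  have props : ∀ n : ℕ, ∃ A B : E → ℤ, IsCircZ src tgt A ∧ IsCircZ src tgt B ∧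
      (∀ e, 0 ≤ A e) ∧ (∀ e, 0 ≤ B e) ∧
      (∀ e, (st n).1 e = 2 * (st (n+1)).1 e + (A e - B e)) ∧
      (∀ e, 2 * ((st (n+1)).1 e).natAbs ≤ ((st n).1 e).natAbs + 1) ∧
      ((∀ e, ((st n).1 e).natAbs ≤ 1) → (st (n+1)).1 = fun _ => 0) ∧
      circCost c (fun e => A e + B e) ≤ circCost c Cs :=
    fun n => (L (st n).1 (st n).2).choose_spec.2
  let A : ℕ → E → ℤ := fun n => (props n).choose
  let B : ℕ → E → ℤ := fun n => (props n).choose_spec.choose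
  have hAB : ∀ n : ℕ, IsCircZ src tgt (A n) ∧ IsCircZ src tgt (B n) ∧
      (∀ e, 0 ≤ A n e) ∧ (∀ e, 0 ≤ B n e) ∧
      (∀ e, (st n).1 e = 2 * (st (n+1)).1 e + (A n e - B n e)) ∧
      (∀ e, 2 * ((st (n+1)).1 e).natAbs ≤ ((st n).1 e).natAbs + 1) ∧
      ((∀ e, ((st n).1 e).natAbs ≤ 1) → (st (n+1)).1 = fun _ => 0) ∧
      circCost c (fun e => A n e + B n e) ≤ circCost c Cs :=
    fun n => (props n).choose_spec.choose_spec
  -- norm invariant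
  have hnorm : ∀ n, n ≤ k → ∀ e, ((st n).1 e).natAbs ≤ 2 ^ (k - n) := by
    intro n
    induction n with
    | zero =>
      intro _ e
      have h1 : (X e).natAbs ≤ circNorm X := by
        unfold circNorm
        exact Finset.le_sup (f := fun e => (X e).natAbs) (Finset.mem_univ e)
      have h2 : circNorm X ≤ 2 ^ k := Nat.le_pow_clog one_lt_two _
      simpa using (le_trans h1 h2 : ((st 0).1 e).natAbs ≤ 2 ^ k)
    | succ n ihn =>
      intro hn e
      have h1 := (hAB n).2.2.2.2.2.1 e
      have h2 := ihn (by omega) e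
      have h3 : k - n = (k - (n+1)) + 1 := by omega
      rw [h3, pow_succ] at h2
      omega
  -- vanishing at level k+1
  have hzero : ∀ e, (st (k+1)).1 e = 0 := by
    have hsmall : ∀ e, ((st k).1 e).natAbs ≤ 1 := by
      have := hnorm k (le_refl k)
      simpa [Nat.sub_self] using this
    have h := (hAB k).2.2.2.2.2.2.1 hsmall
    intro e
    rw [h]
  -- telescoping
  have htel : ∀ n : ℕ, ∀ e, X e =
      (∑ i ∈ Finset.range n, 2 ^ i * (A i e - B i e)) + 2 ^ n * (st n).1 e := by
    intro n
    induction n with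
    | zero =>
      intro e
      simp [st]
    | succ n ihn =>
      intro e
      rw [Finset.sum_range_succ]
      have h1 := ihn e
      have h2 := (hAB n).2.2.2.2.1 e
      have h3 : (2:ℤ) ^ (n+1) = 2 ^ n * 2 := pow_succ 2 n
      rw [h3]
      linear_combination h1 + 2 ^ n * h2
  refine ⟨fun i => A i.1, fun i => B i.1, ?_, ?_, ?_⟩
  · intro i
    exact ⟨(hAB i.1).1, (hAB i.1).2.1, (hAB i.1).2.2.1, (hAB i.1).2.2.2.1⟩
  · intro e
    have h1 := htel (k+1) e
    rw [hzero e, mul_zero, add_zero] at h1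
    rw [Fin.sum_univ_eq_sum_range (fun i => 2 ^ i * (A i e - B i e)) (k+1)]
    exact h1
  · -- cost bound
    show circCost c (fun e => ∑ i : Fin (k+1), (A i.1 e + B i.1 e))
        ≤ (k + 1 : ℝ) * mccc src tgt c
    have hm : circCost c Cs = mccc src tgt c := by
      unfold mccc
      exact hCscost
    have hswap : circCost c (fun e => ∑ i : Fin (k+1), (A i.1 e + B i.1 e))
        = ∑ i : Fin (k+1), circCost c (fun e => A i.1 e + B i.1 e) := by
      unfold circCost
      calc ∑ e, c e * ((∑ i : Fin (k+1), (A i.1 e + B i.1 e) : ℤ) : ℝ)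
          = ∑ e, ∑ i : Fin (k+1), c e * ((A i.1 e + B i.1 e : ℤ) : ℝ) := by
            refine Finset.sum_congr rfl fun e _ => ?_
            push_cast
            rw [Finset.mul_sum]
        _ = ∑ i : Fin (k+1), ∑ e, c e * ((A i.1 e + B i.1 e : ℤ) : ℝ) := Finset.sum_comm
    rw [hswap]
    have hle : ∀ i : Fin (k+1), circCost c (fun e => A i.1 e + B i.1 e) ≤ mccc src tgt c := by
      intro i
      have h := (hAB i.1).2.2.2.2.2.2.2
      linarith [hm]
    calc (∑ i : Fin (k+1), circCost c (fun e => A i.1 e + B i.1 e))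
        ≤ ∑ _i : Fin (k+1), mccc src tgt c := Finset.sum_le_sum (fun i _ => hle i)
      _ = (k + 1 : ℝ) * mccc src tgt c := by
          rw [Finset.sum_const, Finset.card_univ, Fintype.card_fin, nsmul_eq_mul]
          push_cast
          ring
end

section
/- Let G be an s-t DAG that is width-stable, i.e., for all nonnegative flows X ≤ Y on G, width(G|_X) ≤ width(G|_Y). Then for every nonnegative flow X on G, there exists an s-t path in G|_X every edge of which has flow value at least |X| / width(G|_X). -/
open Finset

def IsWalk {V E : Type} (src tgt : E → V) : V → V → List E → Prop
  | a, b, [] => a = b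
  | a, b, e :: L => src e = a ∧ IsWalk src tgt (tgt e) b L

def IsPath {V E : Type} (src tgt : E → V) (s t : V) (L : List E) : Prop :=
  L ≠ [] ∧ IsWalk src tgt s t L

def IsDAG {V E : Type} (src tgt : E → V) : Prop :=
  ∀ (v : V) (L : List E), L ≠ [] → ¬ IsWalk src tgt v v L

/-- Width of the subgraph on the edge set `S`: the minimum number of `s`-`t` paths
using only edges of `S` and covering all edges of `S`. -/
noncomputable def widthIn {V E : Type} [Fintype E] (src tgt : E → V) (s t : V)
    (S : Set E) : ℕ :=
  sInf {k | ∃ P : Fin k → List E,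
    (∀ i, IsPath src tgt s t (P i) ∧ ∀ e ∈ P i, e ∈ S) ∧ ∀ e ∈ S, ∃ i, e ∈ P i}

def IsFlowN {V E : Type} [Fintype E] [DecidableEq V] (src tgt : E → V) (s t : V)
    (X : E → ℕ) : Prop :=
  ∀ v : V, v ≠ s → v ≠ t →
    (∑ e, if tgt e = v then X e else 0) = ∑ e, if src e = v then X e else 0

/-- Total flow out of the source `s`. -/
def flowValue {V E : Type} [Fintype E] [DecidableEq V] (src : E → V) (s : V)
    (X : E → ℕ) : ℕ :=
  ∑ e, if src e = s then X e else 0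

/-- `G` is width-stable: the width of the support subgraph is monotone in the flow. -/
def WidthStable {V E : Type} [Fintype E] [DecidableEq V] (src tgt : E → V)
    (s t : V) : Prop :=
  ∀ X Y : E → ℕ, IsFlowN src tgt s t X → IsFlowN src tgt s t Y → (∀ e, X e ≤ Y e) →
    widthIn src tgt s t {e | X e ≠ 0} ≤ widthIn src tgt s t {e | Y e ≠ 0}

section WalkLemmas

variable {V E : Type} {src tgt : E → V}

lemma isWalk_nil {a b : V} : IsWalk src tgt a b ([] : List E) ↔ a = b := Iff.rfl

lemma isWalk_cons {a b : V} {e : E} {L : List E} :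
    IsWalk src tgt a b (e :: L) ↔ src e = a ∧ IsWalk src tgt (tgt e) b L := Iff.rfl

lemma isWalk_append_iff {a b : V} {P Q : List E} :
    IsWalk src tgt a b (P ++ Q) ↔ ∃ m, IsWalk src tgt a m P ∧ IsWalk src tgt m b Q := by
  induction P generalizing a with
  | nil => simp [isWalk_nil]
  | cons e P ih =>
      simp only [List.cons_append, isWalk_cons, ih]
      constructor
      · rintro ⟨h1, m, h2, h3⟩; exact ⟨m, ⟨h1, h2⟩, h3⟩
      · rintro ⟨m, ⟨h1, h2⟩, h3⟩; exact ⟨h1, m, h2, h3⟩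

lemma IsWalk.append {a m b : V} {P Q : List E} (h1 : IsWalk src tgt a m P)
    (h2 : IsWalk src tgt m b Q) : IsWalk src tgt a b (P ++ Q) :=
  isWalk_append_iff.2 ⟨m, h1, h2⟩

lemma IsWalk.snoc {a v : V} {L : List E} (h : IsWalk src tgt a v L) {e : E}
    (he : src e = v) : IsWalk src tgt a (tgt e) (L ++ [e]) :=
  h.append ⟨he, rfl⟩

lemma isWalk_last {a b : V} {L : List E} (h : IsWalk src tgt a b L) (hne : L ≠ []) :
    ∃ g ∈ L, tgt g = b := by
  induction L generalizing a with
  | nil => exact absurd rfl hne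
  | cons e L ih =>
      obtain ⟨h1, h2⟩ := h
      rcases L with _ | ⟨f, L'⟩
      · exact ⟨e, List.mem_cons_self, h2⟩
      · obtain ⟨g, hg, hgt⟩ := ih h2 (by simp)
        exact ⟨g, List.mem_cons_of_mem _ hg, hgt⟩

lemma isWalk_nodup (hdag : IsDAG src tgt) {a b : V} {L : List E}
    (h : IsWalk src tgt a b L) : L.Nodup := by
  induction L generalizing a with
  | nil => exact List.nodup_nil
  | cons e L ih =>
      obtain ⟨h1, h2⟩ := h
      refine List.nodup_cons.2 ⟨?_, ih h2⟩
      intro hmem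
      obtain ⟨L₁, L₂, rfl⟩ := List.append_of_mem hmem
      obtain ⟨m, hm1, hm2⟩ := isWalk_append_iff.1 h2
      obtain ⟨hm3, hm4⟩ := hm2
      -- hm1 : IsWalk (tgt e) m L₁,  hm3 : src e = m
      exact hdag (src e) (e :: L₁) (by simp) ⟨rfl, hm3 ▸ hm1⟩

end WalkLemmas

section Main
set_option linter.unusedSectionVars false
variable {V E : Type} [Fintype E] [DecidableEq V] {src tgt : E → V}
open scoped Classical


noncomputable def cntP {E : Type} (P : E → Prop) (p : List E) : ℕ :=
  p.countP (fun g => decide (P g))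

lemma cntP_nil (P : E → Prop) : cntP P ([] : List E) = 0 := rfl

lemma cntP_cons (P : E → Prop) [DecidablePred P] (g : E) (p : List E) :
    cntP P (g :: p) = cntP P p + (if P g then 1 else 0) := by
  simp [cntP, List.countP_cons]

lemma cntP_append (P : E → Prop) (p q : List E) :
    cntP P (p ++ q) = cntP P p + cntP P q := by
  simp [cntP, List.countP_append]

lemma cntP_eq_zero {P : E → Prop} {p : List E} (h : ∀ g ∈ p, ¬ P g) : cntP P p = 0 := by
  induction p with
  | nil => rfl
  | cons g p ih =>
      rw [cntP_cons, ih (fun x hx => h x (List.mem_cons_of_mem _ hx)),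
        if_neg (h g (List.mem_cons_self))]

lemma sum_ite_count (P : E → Prop) [DecidablePred P] (p : List E) :
    (∑ e, if P e then p.count e else 0) = cntP P p := by
  induction p with
  | nil => simp [cntP_nil]
  | cons g p ih =>
      rw [cntP_cons, ← ih]
      have h1 : ∀ e : E, (if P e then (g :: p).count e else 0) =
          (if P e then p.count e else 0) + (if e = g then (if P e then 1 else 0) else 0) := by
        intro e
        by_cases heg : e = g
        · subst heg; by_cases hP : P e <;> simp [hP, List.count_cons]
        · by_cases hP : P e <;> simp [hP, heg, Ne.symm heg, List.count_cons]
      rw [Finset.sum_congr rfl (fun e _ => h1 e), Finset.sum_add_distrib,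
        Finset.sum_ite_eq' Finset.univ g (fun e => if P e then 1 else 0)]
      simp

lemma isWalk_cnt {a b : V} {L : List E} (h : IsWalk src tgt a b L) (v : V) :
    (cntP (fun g => tgt g = v) L : ℤ) - cntP (fun g => src g = v) L =
      (if b = v then 1 else 0) - (if a = v then 1 else 0) := by
  induction L generalizing a with
  | nil => rw [show a = b from h]; simp [cntP_nil]
  | cons e L ih =>
      obtain ⟨h1, h2⟩ := h
      rw [cntP_cons, cntP_cons, h1]
      have := ih h2
      push_cast
      push_cast at this
      by_cases h3 : tgt e = v <;> by_cases h4 : a = v <;> by_cases h5 : b = v <;>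
        simp [h3, h4, h5] at this ⊢ <;> linarith

lemma sum_ite_listsum (P : E → Prop) [DecidablePred P] (Ls : List (List E)) :
    (∑ e, if P e then (Ls.map (fun p => p.count e)).sum else 0) = (Ls.map (cntP P)).sum := by
  induction Ls with
  | nil => simp
  | cons p Ls ih =>
      simp only [List.map_cons, List.sum_cons]
      rw [← ih, ← sum_ite_count P p, ← Finset.sum_add_distrib]
      refine Finset.sum_congr rfl (fun e _ => ?_)
      by_cases hP : P e <;> simp [hP]

section Flow
variable (s t : V)

lemma value_eq_inflow (hs : ∀ e, tgt e ≠ s) (ht : ∀ e, src e ≠ t) (X : E → ℕ)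
    (hX : IsFlowN src tgt s t X) :
    flowValue src s X = ∑ e, if tgt e = t then X e else 0 := by
  by_cases hst : s = t
  · subst hst
    rw [flowValue]
    rw [Finset.sum_eq_zero (fun e _ => by rw [if_neg (ht e)]),
      Finset.sum_eq_zero (fun e _ => by rw [if_neg (hs e)])]
  · set W : Finset V := ((Finset.univ.image src ∪ Finset.univ.image tgt) ∪ {s, t}) with hW
    have hsW : s ∈ W := by simp [hW]
    have htW : t ∈ W := by simp [hW]
    have hkey : ∑ v ∈ W, (∑ e, if src e = v then X e else 0)
        = ∑ v ∈ W, (∑ e, if tgt e = v then X e else 0) := by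
      rw [Finset.sum_comm, Finset.sum_comm (s := W)]
      refine Finset.sum_congr rfl (fun e _ => ?_)
      rw [Finset.sum_ite_eq W (src e) (fun _ => X e),
        Finset.sum_ite_eq W (tgt e) (fun _ => X e),
        if_pos (by simp [hW]), if_pos (by simp [hW])]
    have htW' : t ∈ W.erase s := Finset.mem_erase.2 ⟨fun h => hst h.symm, htW⟩
    rw [← Finset.add_sum_erase W _ hsW, ← Finset.add_sum_erase W _ hsW,
      ← Finset.add_sum_erase _ _ htW', ← Finset.add_sum_erase _ _ htW'] at hkey
    have hrest : ∑ v ∈ (W.erase s).erase t, (∑ e, if src e = v then X e else 0)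
        = ∑ v ∈ (W.erase s).erase t, (∑ e, if tgt e = v then X e else 0) := by
      refine Finset.sum_congr rfl (fun v hv => ?_)
      have h1 := Finset.mem_erase.1 hv
      have h2 := Finset.mem_erase.1 h1.2
      exact (hX v h2.1 h1.1).symm
    have hint : (∑ e, if tgt e = s then X e else 0) = 0 :=
      Finset.sum_eq_zero (fun e _ => by rw [if_neg (hs e)])
    have hout : (∑ e, if src e = t then X e else 0) = 0 :=
      Finset.sum_eq_zero (fun e _ => by rw [if_neg (ht e)])
    rw [flowValue]
    omega

lemma reach (hdag : IsDAG src tgt) (hs : ∀ e, tgt e ≠ s) (X : E → ℕ)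
    (hX : IsFlowN src tgt s t X) :
    ∀ (n : ℕ) (a v : V) (L : List E), Fintype.card E + 1 - L.length = n →
      IsWalk src tgt a v L → (∀ g ∈ L, X g ≠ 0) →
      (v = t ∨ 0 < ∑ e, if src e = v then X e else 0) →
      ∃ L', IsWalk src tgt a t (L ++ L') ∧ ∀ g ∈ L', X g ≠ 0 := by
  intro n
  induction n with
  | zero =>
      intro a v L hlen hw hnz hinv
      have := (isWalk_nodup hdag hw).length_le_card
      omega
  | succ n ih =>
      intro a v L hlen hw hnz hinv
      rcases hinv with rfl | hpos
      · exact ⟨[], by simpa using hw, by simp⟩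
      · obtain ⟨e, -, he⟩ := Finset.exists_ne_zero_of_sum_ne_zero (by omega :
          (∑ e, if src e = v then X e else 0) ≠ 0)
        have hsrc : src e = v := by
          by_contra h; rw [if_neg h] at he; exact he rfl
        have hXe : X e ≠ 0 := by
          rw [if_pos hsrc] at he; exact he
        have hw' : IsWalk src tgt a (tgt e) (L ++ [e]) := hw.snoc hsrc
        have hnz' : ∀ g ∈ L ++ [e], X g ≠ 0 := by
          intro g hg
          rcases List.mem_append.1 hg with h | h
          · exact hnz g h
          · rw [List.mem_singleton.1 h]; exact hXe
        have hinv' : tgt e = t ∨ 0 < ∑ e', if src e' = tgt e then X e' else 0 := by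
          by_cases h : tgt e = t
          · exact Or.inl h
          · right
            rw [← hX (tgt e) (hs e) h]
            calc 0 < X e := Nat.pos_of_ne_zero hXe
              _ = if tgt e = tgt e then X e else 0 := by rw [if_pos rfl]
              _ ≤ _ := Finset.single_le_sum (f := fun e' => if tgt e' = tgt e then X e' else 0)
                  (fun _ _ => Nat.zero_le _) (Finset.mem_univ e)
        have hlen' : Fintype.card E + 1 - (L ++ [e]).length = n := by
          have := (isWalk_nodup hdag hw').length_le_card
          simp only [List.length_append, List.length_singleton] at this ⊢
          omega
        obtain ⟨L', hw'', hnz''⟩ := ih a (tgt e) (L ++ [e]) hlen' hw' hnz' hinv'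
        exact ⟨e :: L', by simpa [List.append_assoc] using hw'', by
          intro g hg
          rcases List.mem_cons.1 hg with rfl | h
          · exact hXe
          · exact hnz'' g h⟩

lemma value_pos (hdag : IsDAG src tgt) (hs : ∀ e, tgt e ≠ s) (ht : ∀ e, src e ≠ t)
    (X : E → ℕ) (hX : IsFlowN src tgt s t X) (e₀ : E) (h0 : X e₀ ≠ 0) :
    0 < flowValue src s X := by
  have hw0 : IsWalk src tgt (src e₀) (tgt e₀) [e₀] := ⟨rfl, rfl⟩
  have hinv : tgt e₀ = t ∨ 0 < ∑ e, if src e = tgt e₀ then X e else 0 := by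
    by_cases h : tgt e₀ = t
    · exact Or.inl h
    · right
      rw [← hX (tgt e₀) (hs e₀) h]
      calc 0 < X e₀ := Nat.pos_of_ne_zero h0
        _ = if tgt e₀ = tgt e₀ then X e₀ else 0 := by rw [if_pos rfl]
        _ ≤ _ := Finset.single_le_sum (f := fun e' => if tgt e' = tgt e₀ then X e' else 0)
            (fun _ _ => Nat.zero_le _) (Finset.mem_univ e₀)
  obtain ⟨L', hw, hnz⟩ := reach s t hdag hs X hX _ (src e₀) (tgt e₀) [e₀] rfl hw0
    (by intro g hg; rw [List.mem_singleton.1 hg]; exact h0) hinv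
  obtain ⟨g, hg, hgt⟩ := isWalk_last hw (by simp)
  have hXg : X g ≠ 0 := by
    rcases List.mem_append.1 hg with h | h
    · rw [List.mem_singleton.1 h]; exact h0
    · exact hnz g h
  have : 0 < ∑ e, if tgt e = t then X e else 0 :=
    calc 0 < X g := Nat.pos_of_ne_zero hXg
      _ = if tgt g = t then X g else 0 := by rw [if_pos hgt]
      _ ≤ _ := Finset.single_le_sum (f := fun e' => if tgt e' = t then X e' else 0)
          (fun _ _ => Nat.zero_le _) (Finset.mem_univ g)
  rw [value_eq_inflow s t hs ht X hX]
  exact this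

lemma decomp (hdag : IsDAG src tgt) (hs : ∀ e, tgt e ≠ s) (ht : ∀ e, src e ≠ t) :
    ∀ (f : ℕ) (X : E → ℕ), IsFlowN src tgt s t X → flowValue src s X = f →
      ∃ PS : List (List E), PS.length = f ∧
        (∀ p ∈ PS, p ≠ [] ∧ IsWalk src tgt s t p ∧ ∀ g ∈ p, X g ≠ 0) ∧
        ∀ e, X e = (PS.map (fun p => p.count e)).sum := by
  intro f
  induction f with
  | zero =>
      intro X hX hval
      refine ⟨[], rfl, by simp, fun e => ?_⟩
      simp only [List.map_nil, List.sum_nil]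
      by_contra h
      have := value_pos s t hdag hs ht X hX e h
      omega
  | succ f ih =>
      intro X hX hval
      have hpos : 0 < flowValue src s X := by omega
      obtain ⟨e₁, -, he₁⟩ := Finset.exists_ne_zero_of_sum_ne_zero
        (by omega : flowValue src s X ≠ 0)
      have hsrc₁ : src e₁ = s := by
        by_contra h; rw [if_neg h] at he₁; exact he₁ rfl
      have hst : s ≠ t := fun h => ht e₁ (by rw [hsrc₁, h])
      obtain ⟨p, hpw, hpnz⟩ := reach s t hdag hs X hX _ s s [] rfl rfl (by simp)
        (Or.inr hpos)
      rw [List.nil_append] at hpw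
      have hpne : p ≠ [] := by
        rintro rfl; exact hst hpw
      have hnd : p.Nodup := isWalk_nodup hdag hpw
      have hcnt1 : ∀ e, p.count e ≤ 1 := List.nodup_iff_count_le_one.1 hnd
      have hle : ∀ e, p.count e ≤ X e := by
        intro e
        by_cases hmem : e ∈ p
        · exact le_trans (hcnt1 e) (Nat.one_le_iff_ne_zero.2 (hpnz e hmem))
        · rw [List.count_eq_zero_of_not_mem hmem]; exact Nat.zero_le _
      set X' : E → ℕ := fun e => X e - p.count e with hX'def
      have hXsplit : ∀ e, X e = X' e + p.count e := by
        intro e; have := hle e; simp only [hX'def]; omega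
      have hsum_split : ∀ (P : E → Prop) [DecidablePred P],
          (∑ e, if P e then X e else 0) = (∑ e, if P e then X' e else 0) + cntP P p := by
        intro P _
        rw [← sum_ite_count P p, ← Finset.sum_add_distrib]
        refine Finset.sum_congr rfl (fun e _ => ?_)
        by_cases hP : P e
        · simp only [if_pos hP]; exact hXsplit e
        · simp [hP]
      have hX'flow : IsFlowN src tgt s t X' := by
        intro v hvs hvt
        have hcons := hX v hvs hvt
        rw [hsum_split (fun e => tgt e = v), hsum_split (fun e => src e = v)] at hcons
        have hcnt := isWalk_cnt hpw v
        rw [if_neg (fun h => hvt h.symm), if_neg (fun h => hvs h.symm)] at hcnt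
        have : cntP (fun g => tgt g = v) p = cntP (fun g => src g = v) p := by omega
        omega
      have hX'val : flowValue src s X' = f := by
        have h1 : flowValue src s X = flowValue src s X' + cntP (fun e => src e = s) p := by
          rw [flowValue, flowValue]; exact hsum_split (fun e => src e = s)
        have hcnt := isWalk_cnt hpw s
        rw [if_neg (fun h : t = s => hst h.symm), if_pos rfl] at hcnt
        have h0 : cntP (fun g => tgt g = s) p = 0 :=
          cntP_eq_zero (fun g _ => hs g)
        have : cntP (fun g => src g = s) p = 1 := by omega
        omega
      obtain ⟨PS', hlen', hprops', hsum'⟩ := ih X' hX'flow hX'val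
      refine ⟨p :: PS', by simp [hlen'], ?_, ?_⟩
      · intro q hq
        rcases List.mem_cons.1 hq with rfl | hq'
        · exact ⟨hpne, hpw, hpnz⟩
        · obtain ⟨h1, h2, h3⟩ := hprops' q hq'
          refine ⟨h1, h2, fun g hg => ?_⟩
          have := h3 g hg
          have := hXsplit g
          omega
      · intro e
        simp only [List.map_cons, List.sum_cons]
        rw [← hsum' e]
        have := hXsplit e
        omega

end Flow
section Cut
variable (S : Set V)

lemma srcs_not_mem : ∀ (L : List E) (a b : V), IsWalk src tgt a b L → a ∉ S →
    (∀ g ∈ L, ¬(src g ∉ S ∧ tgt g ∈ S)) → ∀ g ∈ L, src g ∉ S ∧ tgt g ∉ S := by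
  intro L
  induction L with
  | nil => intro a b _ _ _ g hg; exact absurd hg List.not_mem_nil
  | cons e L ih =>
      intro a b hw ha hnb g hg
      obtain ⟨h1, h2⟩ := hw
      have hsrc : src e ∉ S := h1 ▸ ha
      have htgt : tgt e ∉ S := by
        intro hmem
        exact hnb e (List.mem_cons_self) ⟨hsrc, hmem⟩
      rcases List.mem_cons.1 hg with rfl | hg'
      · exact ⟨hsrc, htgt⟩
      · exact ih (tgt e) b h2 htgt (fun x hx => hnb x (List.mem_cons_of_mem _ hx)) g hg'

lemma last_cross : ∀ (n : ℕ) (L : List E) (a b : V), L.length ≤ n →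
    IsWalk src tgt a b L → a ∈ S → b ∉ S →
    ∃ L₁ e L₂, L = L₁ ++ e :: L₂ ∧ src e ∈ S ∧ tgt e ∉ S ∧
      IsWalk src tgt (tgt e) b L₂ ∧ ∀ g ∈ L₂, src g ∉ S ∧ tgt g ∉ S := by
  intro n
  induction n with
  | zero =>
      intro L a b hlen hw ha hb
      have : L = [] := List.length_eq_zero_iff.1 (Nat.le_zero.1 hlen)
      subst this
      exact absurd ((show a = b from hw) ▸ ha) hb
  | succ n ih =>
      intro L a b hlen hw ha hb
      rcases L with _ | ⟨e, L'⟩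
      · exact absurd ((show a = b from hw) ▸ ha) hb
      obtain ⟨h1, h2⟩ := hw
      by_cases htgt : tgt e ∈ S
      · obtain ⟨L₁, e', L₂, hsplit, hc1, hc2, hc3, hc4⟩ :=
          ih L' (tgt e) b (by simp only [List.length_cons] at hlen; omega) h2 htgt hb
        exact ⟨e :: L₁, e', L₂, by rw [hsplit]; rfl, hc1, hc2, hc3, hc4⟩
      · by_cases hex : ∃ g ∈ L', tgt g ∈ S
        · obtain ⟨g, hg, hgS⟩ := hex
          obtain ⟨M₁, M₂, rfl⟩ := List.append_of_mem hg
          obtain ⟨m, w1, w2⟩ := isWalk_append_iff.1 h2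
          obtain ⟨w3, w4⟩ := w2
          have hlenM : M₂.length ≤ n := by
            simp only [List.length_cons, List.length_append] at hlen ⊢
            omega
          obtain ⟨N₁, e', N₂, hsplit, hc1, hc2, hc3, hc4⟩ :=
            ih M₂ (tgt g) b hlenM w4 hgS hb
          refine ⟨e :: (M₁ ++ g :: N₁), e', N₂, ?_, hc1, hc2, hc3, hc4⟩
          rw [hsplit]; simp
        · push_neg at hex
          refine ⟨[], e, L', rfl, h1 ▸ ha, htgt, h2, ?_⟩
          intro g hg
          refine srcs_not_mem S L' (tgt e) b h2 htgt ?_ g hg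
          intro x hx hcontra
          exact hex x hx hcontra.2

lemma cross_atmost_one : ∀ (L : List E) (a b : V), IsWalk src tgt a b L →
    (∀ g ∈ L, ¬(src g ∉ S ∧ tgt g ∈ S)) →
    ∀ e₁ ∈ L, ∀ e₂ ∈ L, (src e₁ ∈ S ∧ tgt e₁ ∉ S) → (src e₂ ∈ S ∧ tgt e₂ ∉ S) →
      e₁ = e₂ := by
  intro L
  induction L with
  | nil => intro a b _ _ e₁ h₁; exact absurd h₁ List.not_mem_nil
  | cons e L ih =>
      intro a b hw hnb e₁ h₁ e₂ h₂ hc₁ hc₂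
      obtain ⟨hw1, hw2⟩ := hw
      by_cases hce : src e ∈ S ∧ tgt e ∉ S
      · have hrest : ∀ g ∈ L, src g ∉ S ∧ tgt g ∉ S :=
          srcs_not_mem S L (tgt e) b hw2 hce.2
            (fun x hx => hnb x (List.mem_cons_of_mem _ hx))
        have he₁ : e₁ = e := by
          rcases List.mem_cons.1 h₁ with h | h
          · exact h
          · exact absurd hc₁.1 (hrest e₁ h).1
        have he₂ : e₂ = e := by
          rcases List.mem_cons.1 h₂ with h | h
          · exact h
          · exact absurd hc₂.1 (hrest e₂ h).1
        rw [he₁, he₂]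
      · have he₁ : e₁ ∈ L := by
          rcases List.mem_cons.1 h₁ with h | h
          · exact absurd (h ▸ hc₁) hce
          · exact h
        have he₂ : e₂ ∈ L := by
          rcases List.mem_cons.1 h₂ with h | h
          · exact absurd (h ▸ hc₂) hce
          · exact h
        exact ih (tgt e) b hw2 (fun x hx => hnb x (List.mem_cons_of_mem _ hx))
          e₁ he₁ e₂ he₂ hc₁ hc₂

end Cut
end Main

/-- In a width-stable `s`-`t` DAG, for every nonzero nonnegative flow `X` there is
an `s`-`t` path in `G|_X` carrying at least `|X| / width(G|_X)` flow. -/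
theorem stmt_7 {V E : Type} [Fintype E] [DecidableEq V]
    (src tgt : E → V) (s t : V)
    (hdag : IsDAG src tgt) (hs : ∀ e, tgt e ≠ s) (ht : ∀ e, src e ≠ t)
    (hstable : WidthStable src tgt s t)
    (X : E → ℕ) (hflow : IsFlowN src tgt s t X) (hX0 : X ≠ 0) :
    ∃ L : List E, IsPath src tgt s t L ∧ (∀ e ∈ L, X e ≠ 0) ∧
      ∀ e ∈ L, (flowValue src s X : ℝ) / (widthIn src tgt s t {e | X e ≠ 0} : ℝ)
        ≤ (X e : ℝ) := by
  classical
  obtain ⟨e₀, he₀⟩ : ∃ e, X e ≠ 0 := by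
    by_contra h; push_neg at h; exact hX0 (funext fun e => h e)
  have hfpos : 0 < flowValue src s X := value_pos s t hdag hs ht X hflow e₀ he₀
  set f := flowValue src s X with hf
  set w := widthIn src tgt s t {e | X e ≠ 0} with hwdef
  obtain ⟨e₁, -, he₁⟩ := Finset.exists_ne_zero_of_sum_ne_zero
    (by omega : flowValue src s X ≠ 0)
  have hsrc₁ : src e₁ = s := by
    by_contra h; rw [if_neg h] at he₁; exact he₁ rfl
  have hst : s ≠ t := fun h => ht e₁ (by rw [hsrc₁, h])
  obtain ⟨PS, hlen, hprops, hsum⟩ := decomp s t hdag hs ht f X hflow rfl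
  -- supp X is covered by the decomposition paths, so the width set is nonempty
  have hfmem : ∀ (Y : E → ℕ) (QS : List (List E)), QS.length = f →
      (∀ p ∈ QS, p ≠ [] ∧ IsWalk src tgt s t p ∧ ∀ g ∈ p, Y g ≠ 0) →
      (∀ e, Y e ≠ 0 → ∃ p ∈ QS, e ∈ p) →
      f ∈ {k | ∃ P : Fin k → List E,
        (∀ i, IsPath src tgt s t (P i) ∧ ∀ e ∈ P i, e ∈ {e | Y e ≠ 0}) ∧
        ∀ e ∈ {e | Y e ≠ 0}, ∃ i, e ∈ P i} := by
    intro Y QS hQlen hQprops hQcover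
    refine ⟨fun i => QS.get (Fin.cast hQlen.symm i), fun i => ?_, fun e he => ?_⟩
    · obtain ⟨h1, h2, h3⟩ := hQprops _ (QS.get_mem _)
      exact ⟨⟨h1, h2⟩, fun e he => h3 e he⟩
    · obtain ⟨p, hp, hep⟩ := hQcover e he
      obtain ⟨n, hn⟩ := List.mem_iff_get.1 hp
      exact ⟨Fin.cast hQlen n, show e ∈ QS.get n from hn.symm ▸ hep⟩
  have hXcover : ∀ e, X e ≠ 0 → ∃ p ∈ PS, e ∈ p := by
    intro e he
    by_contra h
    push_neg at h
    have : (PS.map (fun p => p.count e)).sum = 0 := by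
      apply List.sum_eq_zero
      intro x hx
      obtain ⟨p, hp, rfl⟩ := List.mem_map.1 hx
      exact List.count_eq_zero_of_not_mem (h p hp)
    rw [hsum e] at he
    exact he this
  have hwmem : w ∈ {k | ∃ P : Fin k → List E,
      (∀ i, IsPath src tgt s t (P i) ∧ ∀ e ∈ P i, e ∈ {e | X e ≠ 0}) ∧
      ∀ e ∈ {e | X e ≠ 0}, ∃ i, e ∈ P i} :=
    Nat.sInf_mem ⟨f, hfmem X PS hlen hprops hXcover⟩
  obtain ⟨Pw, hPw1, hPw2⟩ := hwmem
  have hw1 : 1 ≤ w := by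
    obtain ⟨i, -⟩ := hPw2 e₀ he₀
    exact i.pos
  set q := (f - 1) / w + 1 with hq
  have hq1 : 1 ≤ q := by rw [hq]; exact Nat.succ_le_succ (Nat.zero_le _)
  have hlight : (q - 1) * w ≤ f - 1 := by
    simp only [hq, Nat.add_sub_cancel]
    exact Nat.div_mul_le_self _ _
  have hqw : f ≤ q * w := by
    have h1 := Nat.div_add_mod (f - 1) w
    have h2 : (f - 1) % w < w := Nat.mod_lt _ (by omega)
    have h3 : q * w = (f-1)/w * w + w := by rw [hq, add_mul, one_mul]
    have h4 : (f-1)/w * w = w * ((f-1)/w) := Nat.mul_comm _ _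
    omega
  set S : Set V := {v | ∃ L, IsWalk src tgt s v L ∧ ∀ g ∈ L, q ≤ X g} with hS
  have hsS : s ∈ S := ⟨[], rfl, by simp⟩
  have hclosure : ∀ e, src e ∈ S → q ≤ X e → tgt e ∈ S := by
    rintro e ⟨L, hw', hh⟩ hqe
    refine ⟨L ++ [e], hw'.snoc rfl, ?_⟩
    intro g hg
    rcases List.mem_append.1 hg with h | h
    · exact hh g h
    · rw [List.mem_singleton.1 h]; exact hqe
  by_cases htS : t ∈ S
  · obtain ⟨L, hw', hh⟩ := htS
    have hne : L ≠ [] := by rintro rfl; exact hst hw'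
    refine ⟨L, ⟨hne, hw'⟩, fun e he => by have := hh e he; omega, fun e he => ?_⟩
    have hqe : q ≤ X e := hh e he
    rw [div_le_iff₀ (by exact_mod_cast hw1 : (0:ℝ) < (w:ℝ))]
    have : f ≤ X e * w := le_trans hqw (Nat.mul_le_mul_right w hqe)
    exact_mod_cast this
  · exfalso
    have hheavyS : ∀ (h : List E) (a v : V), a ∈ S → IsWalk src tgt a v h →
        (∀ g ∈ h, q ≤ X g) → ∀ g ∈ h, src g ∈ S ∧ tgt g ∈ S := by
      intro h
      induction h with
      | nil => intro a v _ _ _ g hg; exact absurd hg List.not_mem_nil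
      | cons e h ih =>
          intro a v ha hw' hh g hg
          obtain ⟨h1, h2⟩ := hw'
          have hsrc : src e ∈ S := h1 ▸ ha
          have htgt : tgt e ∈ S := hclosure e hsrc (hh e (List.mem_cons_self))
          rcases List.mem_cons.1 hg with rfl | hg'
          · exact ⟨hsrc, htgt⟩
          · exact ih (tgt e) v htgt h2 (fun x hx => hh x (List.mem_cons_of_mem _ hx)) g hg'
    have hhat : ∀ p ∈ PS, ∃ p' : List E,
        IsWalk src tgt s t p' ∧ p' ≠ [] ∧ (∀ g ∈ p', X g ≠ 0) ∧
        (∀ g ∈ p', ¬(src g ∉ S ∧ tgt g ∈ S)) ∧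
        cntP (fun g => src g ∈ S ∧ tgt g ∉ S) p' = 1 ∧
        (∀ e, src e ∈ S → tgt e ∉ S → p'.count e ≤ p.count e) := by
      intro p hp
      obtain ⟨hpne, hpw, hpnz⟩ := hprops p hp
      obtain ⟨L₁, e', L₂, hsplit, hc1, hc2, hc3, hc4⟩ :=
        last_cross S p.length p s t le_rfl hpw hsS htS
      obtain ⟨hh, hhw, hhh⟩ := hc1
      have hc1' : src e' ∈ S := ⟨hh, hhw, hhh⟩
      have hhS : ∀ g ∈ hh, src g ∈ S ∧ tgt g ∈ S := hheavyS hh s (src e') hsS hhw hhh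
      have hmemp : ∀ g, g ∈ e' :: L₂ → g ∈ p := by
        intro g hg; rw [hsplit]; exact List.mem_append_right _ hg
      refine ⟨hh ++ e' :: L₂, hhw.append ⟨rfl, hc3⟩, by simp, ?_, ?_, ?_, ?_⟩
      · intro g hg
        rcases List.mem_append.1 hg with hgh | hgl
        · have := hhh g hgh; omega
        · exact hpnz g (hmemp g hgl)
      · rintro g hg ⟨hg1, hg2⟩
        rcases List.mem_append.1 hg with hgh | hgl
        · exact hg1 (hhS g hgh).1
        · rcases List.mem_cons.1 hgl with rfl | hgl'
          · exact hg1 hc1'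
          · exact (hc4 g hgl').2 hg2
      · have hh0 : cntP (fun g => src g ∈ S ∧ tgt g ∉ S) hh = 0 :=
          cntP_eq_zero (fun g hg hcr => hcr.2 (hhS g hg).2)
        have hl0 : cntP (fun g => src g ∈ S ∧ tgt g ∉ S) L₂ = 0 :=
          cntP_eq_zero (fun g hg hcr => (hc4 g hg).1 hcr.1)
        rw [cntP_append, cntP_cons, hh0, hl0, if_pos ⟨hc1', hc2⟩]
      · intro e heS heT
        have h_h : e ∉ hh := fun hmem => heT (hhS e hmem).2
        have h_l : e ∉ L₂ := fun hmem => (hc4 e hmem).1 heS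
        rw [List.count_append, List.count_eq_zero_of_not_mem h_h, List.count_cons,
          List.count_eq_zero_of_not_mem h_l]
        by_cases hee : e = e'
        · subst hee
          have hmem : e ∈ p := hmemp e (List.mem_cons_self)
          have hcnt : p.count e ≠ 0 := fun hc => (List.count_eq_zero.1 hc) hmem
          rw [if_pos (by simp)]
          omega
        · rw [if_neg (by simp only [beq_iff_eq]; exact fun h => hee h.symm)]
          omega
    choose F hF using hhat
    set PS' : List (List E) := PS.attach.map (fun x => F x.1 x.2) with hPS'
    have hmem' : ∀ p' ∈ PS', IsWalk src tgt s t p' ∧ p' ≠ [] ∧ (∀ g ∈ p', X g ≠ 0) ∧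
        (∀ g ∈ p', ¬(src g ∉ S ∧ tgt g ∈ S)) ∧
        cntP (fun g => src g ∈ S ∧ tgt g ∉ S) p' = 1 := by
      intro p' hp'
      obtain ⟨x, hx, rfl⟩ := List.mem_map.1 hp'
      obtain ⟨a1, a2, a3, a4, a5, -⟩ := hF x.1 x.2
      exact ⟨a1, a2, a3, a4, a5⟩
    have hlen' : PS'.length = f := by
      rw [hPS', List.length_map, List.length_attach, hlen]
    set Xh : E → ℕ := fun e => (PS'.map (fun p => p.count e)).sum with hXh
    have hXhflow : IsFlowN src tgt s t Xh := by
      intro v hvs hvt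
      simp only [hXh]
      rw [sum_ite_listsum, sum_ite_listsum]
      congr 1
      apply List.map_congr_left
      intro p' hp'
      have hcnt := isWalk_cnt (hmem' p' hp').1 v
      rw [if_neg (fun h => hvt h.symm), if_neg (fun h => hvs h.symm)] at hcnt
      omega
    have hmul : ∀ (P : E → Prop) (_ : DecidablePred P),
        (∑ e, if P e then f * X e else 0) = f * ∑ e, if P e then X e else 0 := by
      intro P _
      rw [Finset.mul_sum]
      refine Finset.sum_congr rfl (fun e _ => ?_)
      by_cases hP : P e <;> simp [hP]
    have hfXflow : IsFlowN src tgt s t (fun e => f * X e) := by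
      intro v hvs hvt
      have hc := hflow v hvs hvt
      simp only []
      rw [hmul _ _, hmul _ _, hc]
    have hle : ∀ e, Xh e ≤ f * X e := by
      intro e
      by_cases hXe : X e = 0
      · have hz : Xh e = 0 := by
          simp only [hXh]
          apply List.sum_eq_zero
          intro x hx
          obtain ⟨p', hp', rfl⟩ := List.mem_map.1 hx
          exact List.count_eq_zero_of_not_mem (fun hmem => ((hmem' p' hp').2.2.1 e hmem) hXe)
        rw [hz]; exact Nat.zero_le _
      · have h1 : Xh e ≤ PS'.length := by
          simp only [hXh]
          calc (PS'.map (fun p => p.count e)).sum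
              ≤ (PS'.map (fun _ => 1)).sum := by
                apply List.sum_le_sum
                intro p' hp'
                exact List.nodup_iff_count_le_one.1 (isWalk_nodup hdag (hmem' p' hp').1) e
            _ = PS'.length := by
                simp
        calc Xh e ≤ PS'.length := h1
          _ = f := hlen'
          _ = f * 1 := (mul_one f).symm
          _ ≤ f * X e := Nat.mul_le_mul_left f (Nat.one_le_iff_ne_zero.2 hXe)
    have hstab : widthIn src tgt s t {e | Xh e ≠ 0} ≤ w := by
      have h1 := hstable Xh (fun e => f * X e) hXhflow hfXflow hle
      have h2 : {e | f * X e ≠ 0} = {e | X e ≠ 0} := by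
        ext e
        simp only [Set.mem_setOf_eq, Nat.mul_ne_zero_iff]
        exact ⟨fun h => h.2, fun h => ⟨by omega, h⟩⟩
      rw [h2] at h1
      exact h1
    have hXhcover : ∀ e, Xh e ≠ 0 → ∃ p' ∈ PS', e ∈ p' := by
      intro e he
      by_contra h
      push_neg at h
      apply he
      simp only [hXh]
      apply List.sum_eq_zero
      intro x hx
      obtain ⟨p', hp', rfl⟩ := List.mem_map.1 hx
      exact List.count_eq_zero_of_not_mem (h p' hp')
    have hprops' : ∀ p' ∈ PS', p' ≠ [] ∧ IsWalk src tgt s t p' ∧ ∀ g ∈ p', Xh g ≠ 0 := by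
      intro p' hp'
      obtain ⟨hw', hne', hnz', -, -⟩ := hmem' p' hp'
      refine ⟨hne', hw', fun g hg => ?_⟩
      have h1 : p'.count g ≠ 0 := fun hc => (List.count_eq_zero.1 hc) hg
      have h2 : p'.count g ≤ Xh g := by
        simp only [hXh]
        exact List.single_le_sum (fun x _ => Nat.zero_le x) _
          (List.mem_map_of_mem (f := fun p => p.count g) hp')
      omega
    have hw'mem : widthIn src tgt s t {e | Xh e ≠ 0} ∈ {k | ∃ P : Fin k → List E,
        (∀ i, IsPath src tgt s t (P i) ∧ ∀ e ∈ P i, e ∈ {e | Xh e ≠ 0}) ∧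
        ∀ e ∈ {e | Xh e ≠ 0}, ∃ i, e ∈ P i} :=
      Nat.sInf_mem ⟨f, hfmem Xh PS' hlen' hprops' hXhcover⟩
    set w' := widthIn src tgt s t {e | Xh e ≠ 0} with hw'def
    obtain ⟨R, hR1, hR2⟩ := hw'mem
    have hnoback : ∀ g, Xh g ≠ 0 → ¬(src g ∉ S ∧ tgt g ∈ S) := by
      intro g hg hcr
      obtain ⟨p', hp', hmem⟩ := hXhcover g hg
      exact (hmem' p' hp').2.2.2.1 g hmem hcr
    have hcross_sum : (∑ e, if (src e ∈ S ∧ tgt e ∉ S) then Xh e else 0) = f := by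
      simp only [hXh]
      rw [sum_ite_listsum]
      rw [List.map_congr_left (g := fun _ => (1:ℕ))
        (fun p' hp' => (hmem' p' hp').2.2.2.2)]
      simp [hlen']
    have hbound : ∀ i : Fin w',
        (∑ e, if ((src e ∈ S ∧ tgt e ∉ S) ∧ e ∈ R i) then Xh e else 0) ≤ q - 1 := by
      intro i
      by_cases hex : ∃ e₂, ((src e₂ ∈ S ∧ tgt e₂ ∉ S) ∧ e₂ ∈ R i) ∧ Xh e₂ ≠ 0
      · obtain ⟨e₂, ⟨hcr₂, hmem₂⟩, hne₂⟩ := hex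
        have hRwalk : IsWalk src tgt s t (R i) := (hR1 i).1.2
        have hRsupp : ∀ g ∈ R i, Xh g ≠ 0 := fun g hg => (hR1 i).2 g hg
        have honly : ∀ e₃, e₃ ≠ e₂ → ¬((src e₃ ∈ S ∧ tgt e₃ ∉ S) ∧ e₃ ∈ R i) := by
          intro e₃ hne h3
          exact hne (cross_atmost_one S (R i) s t hRwalk
            (fun g hg => hnoback g (hRsupp g hg)) e₃ h3.2 e₂ hmem₂ h3.1 hcr₂)
        have hsing : (∑ e, if ((src e ∈ S ∧ tgt e ∉ S) ∧ e ∈ R i) then Xh e else 0)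
            = Xh e₂ := by
          rw [Finset.sum_eq_single e₂]
          · rw [if_pos ⟨hcr₂, hmem₂⟩]
          · intro e₃ _ hne; rw [if_neg (honly e₃ hne)]
          · intro h; exact absurd (Finset.mem_univ e₂) h
        rw [hsing]
        have hXle : Xh e₂ ≤ X e₂ := by
          rw [hsum e₂]
          simp only [hXh, hPS', List.map_map]
          rw [← List.attach_map_val (l := PS) (f := fun p => p.count e₂)]
          apply List.sum_le_sum
          intro x hx
          exact (hF x.1 x.2).2.2.2.2.2 e₂ hcr₂.1 hcr₂.2
        have hXq : X e₂ ≤ q - 1 := by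
          by_contra hcon
          push_neg at hcon
          exact hcr₂.2 (hclosure e₂ hcr₂.1 (by omega))
        omega
      · push_neg at hex
        rw [Finset.sum_eq_zero]
        · exact Nat.zero_le _
        · intro e _
          by_cases hcond : ((src e ∈ S ∧ tgt e ∉ S) ∧ e ∈ R i)
          · rw [if_pos hcond]; exact hex e hcond
          · rw [if_neg hcond]
    have hstep : (∑ e, if (src e ∈ S ∧ tgt e ∉ S) then Xh e else 0)
        ≤ ∑ i : Fin w', (∑ e, if ((src e ∈ S ∧ tgt e ∉ S) ∧ e ∈ R i) then Xh e else 0) := by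
      rw [Finset.sum_comm]
      apply Finset.sum_le_sum
      intro e _
      by_cases hcr : (src e ∈ S ∧ tgt e ∉ S)
      · rw [if_pos hcr]
        by_cases hne : Xh e = 0
        · rw [hne]; exact Nat.zero_le _
        · obtain ⟨i, hi⟩ := hR2 e hne
          calc Xh e = (if ((src e ∈ S ∧ tgt e ∉ S) ∧ e ∈ R i) then Xh e else 0) := by
                rw [if_pos ⟨hcr, hi⟩]
            _ ≤ _ := Finset.single_le_sum
                (f := fun i => if ((src e ∈ S ∧ tgt e ∉ S) ∧ e ∈ R i) then Xh e else 0)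
                (fun _ _ => Nat.zero_le _) (Finset.mem_univ i)
      · rw [if_neg hcr]; exact Nat.zero_le _
    have hfinal : f ≤ w' * (q - 1) := by
      calc f = (∑ e, if (src e ∈ S ∧ tgt e ∉ S) then Xh e else 0) := hcross_sum.symm
        _ ≤ ∑ i : Fin w', (∑ e, if ((src e ∈ S ∧ tgt e ∉ S) ∧ e ∈ R i) then Xh e else 0) :=
            hstep
        _ ≤ ∑ _i : Fin w', (q - 1) := Finset.sum_le_sum (fun i _ => hbound i)
        _ = w' * (q - 1) := by
            rw [Finset.sum_const, Finset.card_univ, Fintype.card_fin, smul_eq_mul]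
    have hw'w : w' ≤ w := hstab
    have hfin2 : f ≤ w * (q - 1) := le_trans hfinal (Nat.mul_le_mul_right _ hw'w)
    have hcomm : w * (q - 1) = (q - 1) * w := Nat.mul_comm _ _
    omega
end
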